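/- arXiv:2307.15004 — 6 statements merged into one kernel-verified Lean document; each statement's English description precedes it below -/
import Mathlib

section
/- Let d ≥ 1 and let Σ and Θ be d×d real matrices such that Σ𝟏 = 0, Θᵀ𝟏 = 0, and ΣΘ = I − (1/d)𝟏𝟏ᵀ. Then for every real M > 0 the matrix Σ + M·𝟏𝟏ᵀ is invertible and (Σ + M·𝟏𝟏ᵀ)⁻¹ = Θ + (1/(d²M))·𝟏𝟏ᵀ. -/
open Matrix

noncomputable section

/-- The d×d all-ones matrix 𝟏𝟏ᵀ. -/
def allOnes (d : ℕ) : Matrix (Fin d) (Fin d) ℝ := Matrix.of fun _ _ => (1 : ℝ)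

/-- The all-ones vector 𝟏 in ℝ^d. -/
def onesVec (d : ℕ) : Fin d → ℝ := fun _ => (1 : ℝ)

/-- Proposition 3.1: if Σ𝟏 = 0, Θᵀ𝟏 = 0 and ΣΘ = I − (1/d)𝟏𝟏ᵀ, then for every M > 0
the matrix Σ + M𝟏𝟏ᵀ is invertible with inverse Θ + (1/(d²M))𝟏𝟏ᵀ. -/
theorem extreme_glasso_stmt0 (d : ℕ) (hd : 1 ≤ d)
    (Sig Th : Matrix (Fin d) (Fin d) ℝ)
    (hSig : Sig.mulVec (onesVec d) = 0)
    (hTh : Thᵀ.mulVec (onesVec d) = 0)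
    (hprod : Sig * Th = 1 - ((d : ℝ))⁻¹ • allOnes d) :
    ∀ M : ℝ, 0 < M →
      IsUnit (Sig + M • allOnes d) ∧
      (Sig + M • allOnes d)⁻¹ = Th + (1 / ((d : ℝ) ^ 2 * M)) • allOnes d := by
  have hd0 : (d : ℝ) ≠ 0 := by positivity
  have hSJ : Sig * allOnes d = 0 := by
    ext i j
    have := congrFun hSig i
    simpa [Matrix.mul_apply, allOnes, Matrix.mulVec, dotProduct, onesVec] using this
  have hJT : allOnes d * Th = 0 := by
    ext i j
    have := congrFun hTh j
    simpa [Matrix.mul_apply, allOnes, Matrix.mulVec, dotProduct, onesVec,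
      Matrix.transpose_apply] using this
  have hJJ : allOnes d * allOnes d = (d : ℝ) • allOnes d := by
    ext i j
    simp [Matrix.mul_apply, allOnes]
  intro M hM
  have hM0 : M ≠ 0 := ne_of_gt hM
  set c : ℝ := 1 / ((d : ℝ) ^ 2 * M) with hc
  have key : (Sig + M • allOnes d) * (Th + c • allOnes d) = 1 := by
    rw [add_mul, mul_add, mul_add, hprod, mul_smul_comm, hSJ, smul_mul_assoc, hJT,
      smul_mul_assoc, mul_smul_comm, hJJ]
    have : M • c • (d : ℝ) • allOnes d = ((d : ℝ))⁻¹ • allOnes d := by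
      rw [smul_smul, smul_smul, hc]
      congr 1
      field_simp
    rw [this]
    simp
  exact ⟨isUnit_iff_exists.mpr ⟨_, key, (mul_eq_one_comm).mp key⟩, Matrix.inv_eq_right_inv key⟩
end
end

section
/- Let d ≥ 1 and let Γ be a symmetric d×d real matrix. For each k ∈ {1,…,d} define the d×d matrix Σ̃^(k) entrywise by Σ̃^(k)_{ij} = (Γ_{ik} + Γ_{jk} − Γ_{ij})/2, and define Σ := −(1/2)(I − 𝟏𝟏ᵀ/d) Γ (I − 𝟏𝟏ᵀ/d). Then (1/d)·Σ_{k=1}^d Σ̃^(k) = Σ + M_Σ·𝟏𝟏ᵀ, where M_Σ = (1/d³)·Σ_{k=1}^d 𝟏ᵀ Σ̃^(k) 𝟏. -/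
open Matrix

noncomputable section

/-- Proposition 3.2: with Σ̃^(k)_{ij} = (Γ_{ik} + Γ_{jk} − Γ_{ij})/2 and
Σ = −(1/2)(I − 𝟏𝟏ᵀ/d)Γ(I − 𝟏𝟏ᵀ/d), one has
(1/d)·Σ_k Σ̃^(k) = Σ + M_Σ·𝟏𝟏ᵀ with M_Σ = (1/d³)·Σ_k 𝟏ᵀΣ̃^(k)𝟏. -/
theorem extreme_glasso_stmt1 (d : ℕ) (hd : 1 ≤ d)
    (Γ : Matrix (Fin d) (Fin d) ℝ) (hΓ : Γ.IsSymm)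
    (Sigt : Fin d → Matrix (Fin d) (Fin d) ℝ)
    (hSigt : ∀ k i j, Sigt k i j = (Γ i k + Γ j k - Γ i j) / 2)
    (Sig : Matrix (Fin d) (Fin d) ℝ)
    (hSig : Sig = (-(1/2 : ℝ)) •
      ((1 - (d : ℝ)⁻¹ • allOnes d) * Γ * (1 - (d : ℝ)⁻¹ • allOnes d)))
    (MSig : ℝ)
    (hMSig : MSig = (1 / (d : ℝ) ^ 3) * ∑ k, ∑ i, ∑ j, Sigt k i j) :
    (1 / (d : ℝ)) • ∑ k, Sigt k = Sig + MSig • allOnes d := by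
  have hdpos : (0:ℝ) < d := by exact_mod_cast hd
  have hdne : (d:ℝ) ≠ 0 := ne_of_gt hdpos
  have hs : ∀ a b, Γ a b = Γ b a := fun a b => hΓ.apply b a
  have hcard : (Finset.univ : Finset (Fin d)).card = d := by simp
  set S : ℝ := ∑ a, ∑ b, Γ a b with hS
  have a1 : ∑ k : Fin d, ∑ i : Fin d, ∑ _j : Fin d, Γ i k = (d:ℝ) * S := by
    simp only [Finset.sum_const, hcard, nsmul_eq_mul, ← Finset.mul_sum]
    rw [Finset.sum_comm]
  have a2 : ∑ k : Fin d, ∑ _i : Fin d, ∑ j : Fin d, Γ j k = (d:ℝ) * S := by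
    simp only [Finset.sum_const, hcard, nsmul_eq_mul, ← Finset.mul_sum]
    rw [Finset.sum_comm]
  have a3 : ∑ _k : Fin d, ∑ i : Fin d, ∑ j : Fin d, Γ i j = (d:ℝ) * S := by
    simp only [Finset.sum_const, hcard, nsmul_eq_mul, ← hS]
  have hM : MSig = S / (2 * (d:ℝ)^2) := by
    rw [hMSig]
    simp only [hSigt, ← Finset.sum_div, Finset.sum_add_distrib, Finset.sum_sub_distrib]
    rw [a1, a2, a3]
    field_simp
    ring
  ext i j
  have hL : ((1 / (d : ℝ)) • ∑ k, Sigt k) i j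
      = (1/(d:ℝ)) * (((∑ k, Γ i k) + (∑ k, Γ j k) - (d:ℝ) * Γ i j) / 2) := by
    simp only [Matrix.smul_apply, Matrix.sum_apply, hSigt, smul_eq_mul]
    rw [← Finset.sum_div, Finset.sum_sub_distrib, Finset.sum_add_distrib,
      Finset.sum_const, hcard, nsmul_eq_mul]
  have hR : Sig i j = -(1/2:ℝ) * (Γ i j - (∑ b, Γ i b)/d - (∑ a, Γ j a)/d + S/(d:ℝ)^2) := by
    rw [hSig]
    simp only [Matrix.smul_apply, Matrix.mul_apply, Matrix.sub_apply, Matrix.one_apply,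
      Matrix.smul_apply, allOnes, Matrix.of_apply, smul_eq_mul, mul_one, sub_mul, mul_sub,
      ite_mul, one_mul, zero_mul, Finset.sum_sub_distrib, Finset.sum_ite_eq',
      Finset.mem_univ, if_true, Finset.mul_sum, Finset.sum_ite_eq, ← Finset.sum_mul]
    have hb : ∀ b, ∑ a, Γ a b = ∑ a, Γ b a := fun b => Finset.sum_congr rfl fun a _ => hs a b
    have c2 : (∑ b : Fin d, ∑ x : Fin d, Γ x b) = S := by rw [hS, Finset.sum_comm]
    simp only [← Finset.mul_sum]
    rw [hb j, c2]
    field_simp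
    ring
  rw [hL, Matrix.add_apply, hR, Matrix.smul_apply, hM]
  have hb : (∑ a, Γ a j) = ∑ a, Γ j a := Finset.sum_congr rfl fun a _ => hs a j
  simp only [allOnes, Matrix.of_apply, smul_eq_mul, mul_one]
  field_simp
  ring
end
end

section
/- Let d ≥ 1 and let Γ be a symmetric d×d real matrix. For each k ∈ {1,…,d} define the d×d matrix Σ̃^(k) entrywise by Σ̃^(k)_{ij} = (Γ_{ik} + Γ_{jk} − Γ_{ij})/2, and define Σ := −(1/2)(I − 𝟏𝟏ᵀ/d) Γ (I − 𝟏𝟏ᵀ/d). Then (1/d)·Σ_{k=1}^d Σ̃^(k) = Σ + (𝟏ᵀΓ𝟏/(2d²))·𝟏𝟏ᵀ. -/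
open Matrix

noncomputable section

lemma extreme_glasso_entry (d : ℕ) (hd : 1 ≤ d) (Γ : Matrix (Fin d) (Fin d) ℝ)
    (hsym : ∀ i j, Γ i j = Γ j i) (i j : Fin d) :
    ∑ k : Fin d, 1 / (d:ℝ) * ((Γ i k + Γ j k - Γ i j) / 2) =
    -(1 / 2) * Γ i j - ∑ k : Fin d, -(1 / 2) * ((↑d)⁻¹ * Γ k j) -
        (∑ k : Fin d, -(1 / 2) * (Γ i k * (↑d)⁻¹) -
          ∑ x : Fin d, ∑ k : Fin d, -(1 / 2) * ((↑d)⁻¹ * Γ k x * (↑d)⁻¹)) +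
      (∑ a : Fin d, ∑ b : Fin d, Γ a b) / (2 * (d:ℝ) ^ 2) := by
  have hdne : (d:ℝ) ≠ 0 := Nat.cast_ne_zero.2 (by omega)
  have hcard : ((Finset.univ : Finset (Fin d)).card : ℝ) = d := by simp
  have hB : (∑ k, Γ j k) = ∑ k, Γ k j := Finset.sum_congr rfl fun k _ => hsym j k
  set A := ∑ k, Γ i k with hA
  set B := ∑ k, Γ k j with hB'
  set S := ∑ b : Fin d, ∑ a, Γ a b with hS'
  have l1 : ∑ k : Fin d, 1 / (d:ℝ) * ((Γ i k + Γ j k - Γ i j) / 2)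
      = 1/(d:ℝ) * ((A + B - d * Γ i j)/2) := by
    rw [← Finset.mul_sum, ← Finset.sum_div, Finset.sum_sub_distrib,
      Finset.sum_add_distrib, Finset.sum_const, hB]
    simp [nsmul_eq_mul]
    exact Or.inl rfl
  have l2 : ∑ k : Fin d, -(1 / 2 : ℝ) * ((↑d)⁻¹ * Γ k j) = -(1/2) * ((d:ℝ)⁻¹ * B) := by
    rw [hB', Finset.mul_sum, Finset.mul_sum]
  have l3 : ∑ k : Fin d, -(1 / 2 : ℝ) * (Γ i k * (↑d)⁻¹) = -(1/2) * (A * (d:ℝ)⁻¹) := by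
    rw [hA, Finset.sum_mul, Finset.mul_sum]
  have l4 : ∑ x : Fin d, ∑ k : Fin d, -(1 / 2 : ℝ) * ((↑d)⁻¹ * Γ k x * (↑d)⁻¹)
      = -(1/2) * ((d:ℝ)⁻¹ * S * (d:ℝ)⁻¹) := by
    rw [hS', Finset.mul_sum, Finset.sum_mul, Finset.mul_sum]
    refine Finset.sum_congr rfl fun x _ => ?_
    rw [Finset.mul_sum, Finset.sum_mul, Finset.mul_sum]
  have l5 : (∑ a : Fin d, ∑ b : Fin d, Γ a b) / (2 * (d:ℝ) ^ 2) = S / (2*(d:ℝ)^2) := by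
    rw [hS', Finset.sum_comm]
  rw [l1, l2, l3, l4, l5]
  field_simp
  ring

/-- Intermediate identity in the proof of Proposition 3.2:
(1/d)·Σ_k Σ̃^(k) = Σ + (𝟏ᵀΓ𝟏/(2d²))·𝟏𝟏ᵀ. -/
theorem extreme_glasso_stmt2 (d : ℕ) (hd : 1 ≤ d)
    (Γ : Matrix (Fin d) (Fin d) ℝ) (hΓ : Γ.IsSymm)
    (Sigt : Fin d → Matrix (Fin d) (Fin d) ℝ)
    (hSigt : ∀ k i j, Sigt k i j = (Γ i k + Γ j k - Γ i j) / 2)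
    (Sig : Matrix (Fin d) (Fin d) ℝ)
    (hSig : Sig = (-(1/2 : ℝ)) •
      ((1 - (d : ℝ)⁻¹ • allOnes d) * Γ * (1 - (d : ℝ)⁻¹ • allOnes d))) :
    (1 / (d : ℝ)) • ∑ k, Sigt k =
      Sig + ((∑ i, ∑ j, Γ i j) / (2 * (d : ℝ) ^ 2)) • allOnes d := by
  have hsym : ∀ i j, Γ i j = Γ j i := fun i j => by
    have := congrFun (congrFun hΓ i) j
    simpa [Matrix.transpose_apply] using this.symm
  ext i j
  simp only [hSig, Matrix.add_apply, Matrix.smul_apply, Matrix.sum_apply, hSigt,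
    Matrix.mul_apply, Matrix.sub_apply, Matrix.one_apply, Matrix.neg_apply, allOnes,
    Matrix.of_apply, smul_eq_mul]
  simp only [sub_mul, mul_sub, Finset.sum_sub_distrib, Finset.mul_sum, Finset.sum_mul,
    mul_ite, ite_mul, one_mul, mul_one, zero_mul, mul_zero, Finset.sum_ite_eq,
    Finset.sum_ite_eq', Finset.mem_univ, if_true]
  exact extreme_glasso_entry d hd Γ hsym i j
end
end

section
/- Let d ≥ 2, let Θ be a symmetric d×d real matrix with Θ𝟏 = 0 (all row sums equal to zero), and let M > 0. Define Θ* := Θ + (1/(d²M))·𝟏𝟏ᵀ. Then for every k ∈ {1,…,d}, det(Θ*) = (1/M)·det(Θ^(k)). -/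
open Matrix

noncomputable section

/-- Lemma C.1: for a symmetric d×d matrix Θ (d ≥ 2) with zero row sums and M > 0,
setting Θ* = Θ + (1/(d²M))𝟏𝟏ᵀ, one has det(Θ*) = (1/M)·det(Θ^(k)) for every k,
where Θ^(k) deletes the k-th row and column. -/
theorem extreme_glasso_stmt4 (n : ℕ) (hn : 1 ≤ n)
    (M : ℝ) (hM : 0 < M)
    (Th : Matrix (Fin (n + 1)) (Fin (n + 1)) ℝ)
    (hsym : Th.IsSymm)
    (hrow : Th.mulVec (fun _ => (1 : ℝ)) = 0)
    (Thstar : Matrix (Fin (n + 1)) (Fin (n + 1)) ℝ)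
    (hThstar : Thstar = Th + (1 / (((n + 1 : ℕ) : ℝ) ^ 2 * M)) • allOnes (n + 1))
    (k : Fin (n + 1)) :
    Thstar.det = (1 / M) * (Th.submatrix k.succAbove k.succAbove).det := by
  set d : ℝ := ((n + 1 : ℕ) : ℝ) with hd
  have hd0 : d ≠ 0 := by positivity
  have hM0 : M ≠ 0 := ne_of_gt hM
  set c : ℝ := 1 / (d ^ 2 * M) with hc
  -- row sums of Th are zero
  have hrowsum : ∀ i, ∑ j, Th i j = 0 := by
    intro i
    have := congrFun hrow i
    simpa [Matrix.mulVec, dotProduct] using this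
  have hcolsum : ∀ j, ∑ i, Th i j = 0 := by
    intro j
    have : ∀ i, Th i j = Th j i := fun i => by
      conv_lhs => rw [← hsym]
      rfl
    simp only [this]
    exact hrowsum j
  have hTs : ∀ i j, Thstar i j = Th i j + c := by
    intro i j
    simp [hThstar, allOnes, hc, hd]
  -- step 1: replace row k by the sum of all rows
  set B1 : Matrix (Fin (n + 1)) (Fin (n + 1)) ℝ := Thstar.updateRow k (fun _ => d * c)
    with hB1
  have h1 : B1.det = Thstar.det := by
    have key : (∑ i, (1 : ℝ) • Thstar i) = (fun _ => d * c) := by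
      funext j
      simp only [Finset.sum_apply, one_smul]
      refine (Finset.sum_apply j _ _).trans ?_
      have : ∑ i, Thstar i j = ∑ i, (Th i j + c) := by
        refine Finset.sum_congr rfl fun i _ => hTs i j
      rw [this, Finset.sum_add_distrib, hcolsum j, zero_add]
      simp [hd, mul_comm]
    have := Matrix.det_updateRow_sum Thstar k (fun _ => (1 : ℝ))
    rw [key] at this
    simpa using this
  -- step 2: replace column k by the sum of all columns
  set g : Fin (n + 1) → ℝ := fun i => if i = k then d * (d * c) else d * c with hg
  set B2 : Matrix (Fin (n + 1)) (Fin (n + 1)) ℝ := B1.updateCol k g with hB2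
  have h2 : B2.det = B1.det := by
    have key : (fun i => ∑ j, (1 : ℝ) • B1 i j) = g := by
      funext i
      simp only [one_smul, hg]
      by_cases hik : i = k
      · simp only [if_pos hik, hik, hB1, Matrix.updateRow_self]
        simp [hd, mul_comm, mul_assoc]
      · simp only [hik, if_neg hik]
        have : ∀ j, B1 i j = Th i j + c := fun j => by
          rw [hB1, Matrix.updateRow_ne hik]; exact hTs i j
        simp only [this]
        rw [Finset.sum_add_distrib, hrowsum i, zero_add]
        simp [hd, mul_comm]
    have := Matrix.det_updateCol_sum B1 k (fun _ => (1 : ℝ))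
    rw [key] at this
    simpa using this
  -- step 3: subtract (1/d) * row k from the other rows
  set B3 : Matrix (Fin (n + 1)) (Fin (n + 1)) ℝ :=
    Matrix.of fun i j =>
      if i = k then (if j = k then d * (d * c) else d * c)
      else (if j = k then 0 else Th i j) with hB3
  have h3 : B2.det = B3.det := by
    refine Matrix.det_eq_of_forall_row_eq_smul_add_const
      (fun i => if i = k then 0 else 1 / d) k (by simp) ?_
    intro i j
    by_cases hik : i = k
    · by_cases hjk : j = k
      · simp [hB2, hB3, hg, hik, hjk, Matrix.updateCol_self]
      · simp [hB2, hB3, hg, Matrix.updateCol_ne hjk, hB1, hik, hjk]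
    · by_cases hjk : j = k
      · simp only [hB2, hB3, hjk, Matrix.updateCol_self]
        simp only [Matrix.of_apply, if_neg hik, if_pos rfl, hg, if_neg hik, if_pos rfl, ↓reduceIte]
        field_simp
        ring
      · simp only [hB2, Matrix.updateCol_ne hjk, hB1, Matrix.updateRow_ne hik, hB3,
          Matrix.of_apply, if_neg hik, if_neg hjk, if_pos rfl, ↓reduceIte]
        rw [hTs i j]
        field_simp
  -- step 4: subtract (1/d) * column k from the other columns
  set B4 : Matrix (Fin (n + 1)) (Fin (n + 1)) ℝ :=
    Matrix.of fun i j =>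
      if i = k then (if j = k then d * (d * c) else 0)
      else (if j = k then 0 else Th i j) with hB4
  have h4 : B3.det = B4.det := by
    rw [← Matrix.det_transpose B3, ← Matrix.det_transpose B4]
    refine Matrix.det_eq_of_forall_row_eq_smul_add_const
      (fun i => if i = k then 0 else 1 / d) k (by simp) ?_
    intro i j
    simp only [Matrix.transpose_apply, hB3, hB4, Matrix.of_apply]
    by_cases hik : i = k
    · subst hik
      simp
    · by_cases hjk : j = k
      · subst hjk
        simp only [if_pos rfl, if_neg hik, ↓reduceIte]
        field_simp
        ring
      · simp [if_neg hik, if_neg hjk]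
  -- step 5: Laplace expansion of B4 along row k
  have h5 : B4.det = d * (d * c) * (Th.submatrix k.succAbove k.succAbove).det := by
    rw [Matrix.det_succ_row B4 k]
    rw [Finset.sum_eq_single k]
    · have hsub : B4.submatrix k.succAbove k.succAbove
          = Th.submatrix k.succAbove k.succAbove := by
        ext i j
        simp [hB4, Matrix.submatrix_apply, Fin.succAbove_ne k i, Fin.succAbove_ne k j]
      have hpow : ((-1 : ℝ)) ^ ((k : ℕ) + (k : ℕ)) = 1 := by
        rw [← two_mul, pow_mul]
        norm_num
      rw [hsub, hpow]
      simp [hB4]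
    · intro j _ hjk
      simp [hB4, hjk, if_neg hjk]
    · simp
  have hfinal : d * (d * c) = 1 / M := by
    rw [hc]
    rw [eq_div_iff hM0]
    field_simp
  rw [← h1, ← h2, h3, h4, h5, hfinal]
end
end

section
/- Let d ≥ 1, γ ≥ 0, c ∈ ℝ, and let S* be a symmetric positive definite d×d real matrix. Then the function f(Θ) := −log det(Θ) + tr(S*Θ) + γ·Σ_{i≠j} |Θ_{ij} − c|, defined on the set of symmetric positive definite d×d real matrices, attains a global minimum, and the minimizer is unique. -/
open Matrix

noncomputable section

/-- The off-diagonal ℓ₁ penalty Σ_{i≠j} |Θ_{ij} − c|, summed over all ordered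
pairs (i,j) with i ≠ j. -/
def offDiagPenalty (d : ℕ) (c : ℝ) (Th : Matrix (Fin d) (Fin d) ℝ) : ℝ :=
  ∑ i, ∑ j ∈ Finset.univ.erase i, |Th i j - c|

/-- The extreme graphical lasso objective
f(Θ) = −log det(Θ) + tr(S*Θ) + γ·Σ_{i≠j} |Θ_{ij} − c|. -/
noncomputable def eglassoObjective (d : ℕ) (Sstar : Matrix (Fin d) (Fin d) ℝ)
    (γ c : ℝ) (Th : Matrix (Fin d) (Fin d) ℝ) : ℝ :=
  -Real.log Th.det + (Sstar * Th).trace + γ * offDiagPenalty d c Th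

namespace EGlassoAux

variable {d : ℕ}

open scoped MatrixOrder

lemma diag_nonneg {M : Matrix (Fin d) (Fin d) ℝ} (h : M.PosSemidef) (i : Fin d) : 0 ≤ M i i := by
  have := h.dotProduct_mulVec_nonneg (Pi.single i 1); simpa using this

lemma trace_nonneg {M : Matrix (Fin d) (Fin d) ℝ} (h : M.PosSemidef) : 0 ≤ M.trace :=
  Finset.sum_nonneg fun i _ => diag_nonneg h i

lemma trace_mul_nonneg {A B : Matrix (Fin d) (Fin d) ℝ} (hA : A.PosSemidef)
    (hB : B.PosSemidef) : 0 ≤ (A * B).trace := by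
  obtain ⟨C, hC⟩ := CStarAlgebra.nonneg_iff_eq_star_mul_self.mp hA.nonneg
  rw [Matrix.star_eq_conjTranspose] at hC; subst hC
  have : (Cᴴ * C * B).trace = (C * B * Cᴴ).trace := by
    rw [mul_assoc, Matrix.trace_mul_comm]
  rw [this]
  exact trace_nonneg (hB.mul_mul_conjTranspose_same C)

lemma exists_lambda_min (S : Matrix (Fin d) (Fin d) ℝ) (hS : S.PosDef) :
    ∃ m : ℝ, 0 < m ∧ ∀ Θ : Matrix (Fin d) (Fin d) ℝ, Θ.PosSemidef →
      m * Θ.trace ≤ (S * Θ).trace := by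
  by_cases hd : d = 0
  · subst hd
    exact ⟨1, one_pos, fun Θ _ => by simp [Matrix.trace, Matrix.diag]⟩
  have : Nonempty (Fin d) := ⟨⟨0, Nat.pos_of_ne_zero hd⟩⟩
  classical
  obtain ⟨i₀, -, hmin⟩ := Finset.exists_min_image Finset.univ hS.1.eigenvalues
    ⟨Classical.arbitrary _, Finset.mem_univ _⟩
  set m := hS.1.eigenvalues i₀ with hm
  refine ⟨m, hS.eigenvalues_pos i₀, fun Θ hΘ => ?_⟩
  have hpsd : (S - m • (1 : Matrix (Fin d) (Fin d) ℝ)).PosSemidef := by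
    have hspec := hS.1.spectral_theorem
    set U : Matrix (Fin d) (Fin d) ℝ := (hS.1.eigenvectorUnitary : Matrix (Fin d) (Fin d) ℝ) with hUdef
    have hU : U * star U = 1 := Matrix.mem_unitaryGroup_iff.mp hS.1.eigenvectorUnitary.2
    have h1 : (1 : Matrix (Fin d) (Fin d) ℝ) = U * 1 * star U := by rw [mul_one, hU]
    have hdiag : Matrix.diagonal (RCLike.ofReal ∘ hS.1.eigenvalues) - m • (1 : Matrix (Fin d) (Fin d) ℝ)
        = Matrix.diagonal (fun i => hS.1.eigenvalues i - m) := by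
      ext i j
      rcases eq_or_ne i j with rfl | h
      · simp [Matrix.sub_apply, Matrix.smul_apply, Matrix.diagonal_apply_eq, Matrix.one_apply_eq]
      · simp [Matrix.sub_apply, Matrix.smul_apply, Matrix.diagonal_apply_ne _ h,
          Matrix.one_apply_ne h]
    have : S - m • 1 = U * (Matrix.diagonal (fun i => hS.1.eigenvalues i - m)) * star U := by
      calc S - m • 1 = U * Matrix.diagonal (RCLike.ofReal ∘ hS.1.eigenvalues) * star U
            - m • (U * 1 * star U) := by rw [← h1]; exact congrArg (· - m • 1) hspec
        _ = U * (Matrix.diagonal (RCLike.ofReal ∘ hS.1.eigenvalues) - m • 1) * star U := by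
            noncomm_ring
        _ = _ := by rw [hdiag]
    rw [this, Matrix.star_eq_conjTranspose]
    exact (Matrix.PosSemidef.diagonal
      (fun i => sub_nonneg.mpr (hmin i (Finset.mem_univ i)))).mul_mul_conjTranspose_same U
  have key : 0 ≤ ((S - m • 1) * Θ).trace := trace_mul_nonneg hpsd hΘ
  have expand : ((S - m • 1) * Θ).trace = (S * Θ).trace - m * Θ.trace := by
    rw [Matrix.sub_mul, Matrix.trace_sub, Matrix.smul_mul, Matrix.one_mul, Matrix.trace_smul,
      smul_eq_mul]
  linarith [expand ▸ key]

lemma abs_entry_le_trace {M : Matrix (Fin d) (Fin d) ℝ} (h : M.PosSemidef) (i j : Fin d) :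
    |M i j| ≤ M.trace := by
  have hdiag : ∀ k, 0 ≤ M k k := diag_nonneg h
  have htr : ∀ k, M k k ≤ M.trace := fun k =>
    Finset.single_le_sum (f := fun k => M k k) (fun k _ => hdiag k) (Finset.mem_univ k)
  rcases eq_or_ne i j with rfl | hij
  · rw [abs_of_nonneg (hdiag i)]; exact htr i
  · have hsym : M j i = M i j := by
      have := h.1
      conv_lhs => rw [← this]
      simp [Matrix.conjTranspose_apply]
    have h1 := h.dotProduct_mulVec_nonneg (Pi.single i 1 + Pi.single j 1)
    have h2 := h.dotProduct_mulVec_nonneg (Pi.single i 1 - Pi.single j 1)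
    have e1 : (0:ℝ) ≤ M i i + M j j + (M i j + M j i) := by
      have : star (Pi.single i (1:ℝ) + Pi.single j 1) ⬝ᵥ M *ᵥ (Pi.single i 1 + Pi.single j 1)
          = M i i + M j j + (M i j + M j i) := by
        simp [Matrix.mulVec_add, dotProduct_add, add_dotProduct, hij, hij.symm]
        ring
      linarith [this ▸ h1]
    have e2 : (0:ℝ) ≤ M i i + M j j - (M i j + M j i) := by
      have : star (Pi.single i (1:ℝ) - Pi.single j 1) ⬝ᵥ M *ᵥ (Pi.single i 1 - Pi.single j 1)
          = M i i + M j j - (M i j + M j i) := by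
        simp [Matrix.mulVec_sub, dotProduct_sub, sub_dotProduct,
          Matrix.mulVec_add, dotProduct_add, add_dotProduct, hij, hij.symm]
        ring
      linarith [this ▸ h2]
    have hij2 : |M i j| ≤ (M i i + M j j) / 2 := by
      rw [abs_le]; constructor <;> nlinarith [hsym]
    have key : M i i + M j j ≤ M.trace := by
      have e : M i i + M j j = ∑ k ∈ {i, j}, M k k := by rw [Finset.sum_pair hij]
      rw [e]
      exact Finset.sum_le_sum_of_subset_of_nonneg (Finset.subset_univ _) (fun k _ _ => hdiag k)
    calc |M i j| ≤ (M i i + M j j) / 2 := hij2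
      _ ≤ M.trace := by linarith [key, hdiag i, hdiag j]

lemma abs_det_le {M : Matrix (Fin d) (Fin d) ℝ} {t : ℝ}
    (h : ∀ i j, |M i j| ≤ t) : |M.det| ≤ (Nat.factorial d) * t ^ d := by
  rw [Matrix.det_apply]
  calc |∑ σ : Equiv.Perm (Fin d), Equiv.Perm.sign σ • ∏ i, M (σ i) i|
      ≤ ∑ σ : Equiv.Perm (Fin d), |Equiv.Perm.sign σ • ∏ i, M (σ i) i| :=
        Finset.abs_sum_le_sum_abs _ _
    _ ≤ ∑ σ : Equiv.Perm (Fin d), t ^ d := by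
        refine Finset.sum_le_sum fun σ _ => ?_
        have e : |Equiv.Perm.sign σ • ∏ i, M (σ i) i| = |∏ i, M (σ i) i| := by
          rcases Int.units_eq_one_or (Equiv.Perm.sign σ) with hs | hs <;> simp [hs, abs_neg]
        rw [e, Finset.abs_prod]
        calc ∏ i, |M (σ i) i| ≤ ∏ (_ : Fin d), t :=
              Finset.prod_le_prod (fun i _ => abs_nonneg _) (fun i _ => h _ _)
          _ = t ^ d := by simp [Finset.prod_const]
    _ = (Nat.factorial d) * t ^ d := by simp [Finset.sum_const, Fintype.card_perm]

lemma posDef_of_posSemidef_det_ne_zero {M : Matrix (Fin d) (Fin d) ℝ}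
    (h : M.PosSemidef) (hdet : M.det ≠ 0) : M.PosDef := by
  refine Matrix.PosDef.of_dotProduct_mulVec_pos h.1 fun x hx => ?_
  rcases lt_or_eq_of_le (h.dotProduct_mulVec_nonneg x) with hlt | heq
  · exact hlt
  · exact absurd ((Matrix.exists_mulVec_eq_zero_iff).mp
      ⟨x, hx, (h.dotProduct_mulVec_zero_iff x).mp heq.symm⟩) hdet

lemma posDef_smul {M : Matrix (Fin d) (Fin d) ℝ} (h : M.PosDef) {a : ℝ} (ha : 0 < a) :
    (a • M).PosDef := by
  refine Matrix.PosDef.of_dotProduct_mulVec_pos ?_ fun x hx => ?_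
  · have h1 := h.1
    unfold Matrix.IsHermitian at *
    rw [Matrix.conjTranspose_smul, h1]
    simp
  · rw [Matrix.smul_mulVec, dotProduct_smul, smul_eq_mul]
    exact mul_pos ha (h.dotProduct_mulVec_pos hx)

lemma trace_pos_of_posDef {M : Matrix (Fin d) (Fin d) ℝ} (hd : 1 ≤ d) (h : M.PosDef) :
    0 < M.trace := by
  have i0 : Fin d := ⟨0, hd⟩
  have hdiag : ∀ k, 0 ≤ M k k := diag_nonneg h.posSemidef
  have hpos : 0 < M i0 i0 := by
    have := h.dotProduct_mulVec_pos (x := Pi.single i0 1) (by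
      intro hc
      have := congrFun hc i0
      simp at this)
    simpa using this
  calc (0:ℝ) < M i0 i0 := hpos
    _ ≤ M.trace := Finset.single_le_sum (f := fun k => M k k) (fun k _ => hdiag k)
        (Finset.mem_univ i0)

lemma det_avg_sq_gt {A B : Matrix (Fin d) (Fin d) ℝ} (hA : A.PosDef) (hB : B.PosDef)
    (hne : A ≠ B) :
    A.det * B.det < ((2:ℝ)⁻¹ • (A + B)).det ^ 2 := by
  classical
  set Q := CFC.sqrt A with hQdef
  have hQpsd : Q.PosSemidef := (CFC.sqrt_nonneg A).posSemidef
  have hQQ : Q * Q = A := CFC.sqrt_mul_sqrt_self A hA.posSemidef.nonneg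
  have hdetA : 0 < A.det := hA.det_pos
  have hdetQsq : Q.det * Q.det = A.det := by rw [← Matrix.det_mul, hQQ]
  have hdetQ : Q.det ≠ 0 := fun h => by simp [← hdetQsq, h] at hdetA
  have hQunit : IsUnit Q.det := hdetQ.isUnit
  have hQherm : Qᴴ = Q := hQpsd.1
  set M := Q⁻¹ * B * Q⁻¹ with hMdef
  have hinvherm : (Q⁻¹)ᴴ = Q⁻¹ := by rw [Matrix.conjTranspose_nonsing_inv, hQherm]
  have hMpsd : M.PosSemidef := by
    have := hB.posSemidef.mul_mul_conjTranspose_same Q⁻¹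
    rwa [hinvherm] at this
  have hQMQ : Q * M * Q = B := by
    rw [hMdef]
    calc Q * (Q⁻¹ * B * Q⁻¹) * Q = (Q * Q⁻¹) * B * (Q⁻¹ * Q) := by noncomm_ring
      _ = B := by rw [Matrix.mul_nonsing_inv _ hQunit, Matrix.nonsing_inv_mul _ hQunit,
            one_mul, mul_one]
  have hdetB : B.det = A.det * M.det := by
    rw [← hQMQ, Matrix.det_mul, Matrix.det_mul, ← hdetQsq]; ring
  have hdetM : M.det ≠ 0 := fun h => by
    have hb := hB.det_pos
    rw [hdetB, h, mul_zero] at hb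
    exact lt_irrefl 0 hb
  have hMpd : M.PosDef := posDef_of_posSemidef_det_ne_zero hMpsd hdetM
  have hMne1 : M ≠ 1 := fun h => hne (by rw [← hQQ, ← hQMQ, h, mul_one])
  have hmid : (2:ℝ)⁻¹ • (A + B) = Q * ((2:ℝ)⁻¹ • (1 + M)) * Q := by
    rw [Matrix.mul_smul, Matrix.smul_mul]
    congr 1
    rw [Matrix.mul_add, Matrix.add_mul, Matrix.mul_one, hQQ, hQMQ]
  set X := (2:ℝ)⁻¹ • ((1:Matrix (Fin d) (Fin d) ℝ) + M) with hXdef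
  have hdetmid : ((2:ℝ)⁻¹ • (A + B)).det = A.det * X.det := by
    rw [hmid, Matrix.det_mul, Matrix.det_mul, ← hdetQsq]; ring
  have hH : M.IsHermitian := hMpd.1
  set U : Matrix (Fin d) (Fin d) ℝ := (hH.eigenvectorUnitary : Matrix (Fin d) (Fin d) ℝ) with hU
  have hUU : star U * U = 1 := Matrix.mem_unitaryGroup_iff'.mp hH.eigenvectorUnitary.2
  have hUU' : U * star U = 1 := Matrix.mem_unitaryGroup_iff.mp hH.eigenvectorUnitary.2
  have hdiagM : star U * M * U = Matrix.diagonal (RCLike.ofReal ∘ hH.eigenvalues) :=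
    by have := hH.conjStarAlgAut_star_eigenvectorUnitary; rwa [Unitary.conjStarAlgAut_star_apply] at this
  have hdiagX : star U * X * U = Matrix.diagonal (fun i => (2:ℝ)⁻¹ * (1 + hH.eigenvalues i)) := by
    rw [hXdef, Matrix.mul_smul, Matrix.smul_mul]
    rw [Matrix.mul_add, Matrix.add_mul, Matrix.mul_one, hUU, hdiagM]
    ext i j
    rcases eq_or_ne i j with rfl | h
    · simp [Matrix.diagonal_apply_eq, Matrix.one_apply_eq]
    · simp [Matrix.diagonal_apply_ne _ h, Matrix.one_apply_ne h]
  have hdetU : (star U).det * U.det = 1 := by rw [← Matrix.det_mul, hUU, Matrix.det_one]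
  have hdetX : X.det = ∏ i, (2:ℝ)⁻¹ * (1 + hH.eigenvalues i) := by
    have e : (star U * X * U).det = X.det := by
      rw [Matrix.det_mul, Matrix.det_mul]
      calc (star U).det * X.det * U.det = ((star U).det * U.det) * X.det := by ring
        _ = X.det := by rw [hdetU, one_mul]
    rw [← e, hdiagX, Matrix.det_diagonal]
  have hdetMeq : M.det = ∏ i, hH.eigenvalues i := by
    have := hH.det_eq_prod_eigenvalues
    simpa using this
  have hex : ∃ j, hH.eigenvalues j ≠ 1 := by
    by_contra hall
    push_neg at hall
    apply hMne1
    have e : Matrix.diagonal (RCLike.ofReal ∘ hH.eigenvalues) = (1 : Matrix (Fin d) (Fin d) ℝ) := by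
      ext i j
      rcases eq_or_ne i j with rfl | h
      · simp [hall i]
      · simp [Matrix.diagonal_apply_ne _ h, Matrix.one_apply_ne h]
    rw [hH.spectral_theorem, Unitary.conjStarAlgAut_apply, e, mul_one, hUU']
  obtain ⟨j, hj⟩ := hex
  have hkey : M.det < X.det ^ 2 := by
    rw [hdetMeq, hdetX, ← Finset.prod_pow]
    refine Finset.prod_lt_prod (fun i _ => hMpd.eigenvalues_pos i) (fun i _ => ?_)
      ⟨j, Finset.mem_univ j, ?_⟩
    · nlinarith [sq_nonneg (1 - hH.eigenvalues i)]
    · have h2 : 0 < (hH.eigenvalues j - 1) ^ 2 :=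
        lt_of_le_of_ne (sq_nonneg _) (Ne.symm (pow_ne_zero 2 (sub_ne_zero.mpr hj)))
      nlinarith [h2]
  calc A.det * B.det = A.det ^ 2 * M.det := by rw [hdetB]; ring
    _ < A.det ^ 2 * X.det ^ 2 := by
        have hp : 0 < A.det ^ 2 := by positivity
        exact (mul_lt_mul_iff_right₀ hp).mpr hkey
    _ = ((2:ℝ)⁻¹ • (A + B)).det ^ 2 := by rw [hdetmid]; ring

lemma offDiagPenalty_nonneg (c : ℝ) (Th : Matrix (Fin d) (Fin d) ℝ) :
    0 ≤ offDiagPenalty d c Th :=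
  Finset.sum_nonneg fun _ _ => Finset.sum_nonneg fun _ _ => abs_nonneg _

lemma coercive_trace_bound (hd : 1 ≤ d) {γ c : ℝ} (hγ : 0 ≤ γ)
    {Sstar : Matrix (Fin d) (Fin d) ℝ} {m B : ℝ} (hm : 0 < m)
    (hmle : ∀ Θ : Matrix (Fin d) (Fin d) ℝ, Θ.PosSemidef → m * Θ.trace ≤ (Sstar * Θ).trace)
    {Θ : Matrix (Fin d) (Fin d) ℝ} (hΘpd : Θ.PosDef)
    (hle : eglassoObjective d Sstar γ c Θ ≤ B) :
    Θ.trace ≤ 2 / m * (B + Real.log (Nat.factorial d) + d * Real.log (2 * d / m)) := by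
  set t := Θ.trace with htdef
  have ht : 0 < t := trace_pos_of_posDef hd hΘpd
  have hdpos : (0:ℝ) < d := by exact_mod_cast hd
  have hdet : 0 < Θ.det := hΘpd.det_pos
  have h1 : m * t ≤ B + Real.log Θ.det := by
    have hpen : 0 ≤ γ * offDiagPenalty d c Θ := mul_nonneg hγ (offDiagPenalty_nonneg c Θ)
    have := hmle Θ hΘpd.posSemidef
    unfold eglassoObjective at hle
    linarith
  have h2 : Θ.det ≤ (Nat.factorial d) * t ^ d := by
    calc Θ.det ≤ |Θ.det| := le_abs_self _
      _ ≤ (Nat.factorial d) * t ^ d := abs_det_le (fun i j => abs_entry_le_trace hΘpd.posSemidef i j)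
  have hfac : (0:ℝ) < (Nat.factorial d) := by exact_mod_cast Nat.factorial_pos d
  have h3 : Real.log Θ.det ≤ Real.log (Nat.factorial d) + d * Real.log t := by
    calc Real.log Θ.det ≤ Real.log ((Nat.factorial d) * t ^ d) := Real.log_le_log hdet h2
      _ = Real.log (Nat.factorial d) + d * Real.log t := by
          rw [Real.log_mul hfac.ne' (by positivity), Real.log_pow]
  set a := 2 * d / m with hadef
  have ha : 0 < a := by positivity
  have h4 : Real.log t ≤ t / a + Real.log a - 1 := by
    have := Real.log_le_sub_one_of_pos (show 0 < t / a by positivity)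
    have hlog : Real.log (t / a) = Real.log t - Real.log a := Real.log_div ht.ne' ha.ne'
    linarith
  have hda : (d:ℝ) / a = m / 2 := by
    rw [hadef]; field_simp
  have h5 : (d:ℝ) * Real.log t ≤ m / 2 * t + d * (Real.log a - 1) := by
    have := mul_le_mul_of_nonneg_left h4 hdpos.le
    have e : (d:ℝ) * (t / a) = m / 2 * t := by
      rw [div_eq_mul_inv, ← mul_assoc, mul_comm (d:ℝ) t, mul_assoc, ← div_eq_mul_inv, hda]; ring
    nlinarith
  have key : m / 2 * t ≤ B + Real.log (Nat.factorial d) + d * Real.log a := by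
    nlinarith [hdpos]
  calc t = 2 / m * (m / 2 * t) := by field_simp
    _ ≤ 2 / m * (B + Real.log (Nat.factorial d) + d * Real.log a) := by
        apply mul_le_mul_of_nonneg_left key (by positivity)
    _ = _ := by rw [hadef]

lemma continuous_entry (i j : Fin d) : Continuous fun Θ : Matrix (Fin d) (Fin d) ℝ => Θ i j :=
  (continuous_apply j).comp (continuous_apply i)

lemma continuous_gfun (Sstar : Matrix (Fin d) (Fin d) ℝ) (γ c a : ℝ) (ha : 0 < a) :
    Continuous (fun Θ : Matrix (Fin d) (Fin d) ℝ =>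
      -Real.log (max Θ.det a) + (Sstar * Θ).trace + γ * offDiagPenalty d c Θ) := by
  have hdet : Continuous fun Θ : Matrix (Fin d) (Fin d) ℝ => Θ.det :=
    continuous_id.matrix_det
  have hmax : Continuous fun Θ : Matrix (Fin d) (Fin d) ℝ => max Θ.det a :=
    hdet.max continuous_const
  have hlog : Continuous fun Θ : Matrix (Fin d) (Fin d) ℝ => Real.log (max Θ.det a) :=
    hmax.log fun Θ => (lt_of_lt_of_le ha (le_max_right _ _)).ne'
  have htrace : Continuous fun Θ : Matrix (Fin d) (Fin d) ℝ => (Sstar * Θ).trace :=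
    (continuous_const.matrix_mul continuous_id).matrix_trace
  have hpen : Continuous fun Θ : Matrix (Fin d) (Fin d) ℝ => offDiagPenalty d c Θ := by
    unfold offDiagPenalty
    refine continuous_finset_sum _ fun i _ => continuous_finset_sum _ fun j _ => ?_
    exact ((continuous_entry i j).sub continuous_const).abs
  exact (hlog.neg.add htrace).add (continuous_const.mul hpen)

lemma continuous_quad (x : Fin d → ℝ) :
    Continuous fun Θ : Matrix (Fin d) (Fin d) ℝ => star x ⬝ᵥ Θ *ᵥ x := by
  simp only [dotProduct, Matrix.mulVec]
  exact continuous_finset_sum _ fun i _ => continuous_const.mul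
    (continuous_finset_sum _ fun j _ => (continuous_entry i j).mul continuous_const)

end EGlassoAux

open EGlassoAux

attribute [local instance] Matrix.normedAddCommGroup Matrix.normedSpace

/-- Existence and uniqueness of the minimizer of the extreme graphical lasso
objective over symmetric positive definite matrices. -/
theorem extreme_glasso_stmt8 (d : ℕ) (hd : 1 ≤ d)
    (γ c : ℝ) (hγ : 0 ≤ γ)
    (Sstar : Matrix (Fin d) (Fin d) ℝ) (hSsym : Sstar.IsSymm) (hSpd : Sstar.PosDef) :
    ∃! Th : Matrix (Fin d) (Fin d) ℝ,
      (Th.IsSymm ∧ Th.PosDef) ∧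
      ∀ Th' : Matrix (Fin d) (Fin d) ℝ, Th'.IsSymm → Th'.PosDef →
        eglassoObjective d Sstar γ c Th ≤ eglassoObjective d Sstar γ c Th' := by
  classical
  obtain ⟨m, hm, hmle⟩ := exists_lambda_min Sstar hSpd
  set f := eglassoObjective d Sstar γ c with hfdef
  set B := f 1 with hBdef
  set T := 2 / m * (B + Real.log (Nat.factorial d) + d * Real.log (2 * d / m)) with hTdef
  set a := Real.exp (-B - 1) with hadef
  have ha : 0 < a := Real.exp_pos _
  set g := fun Θ : Matrix (Fin d) (Fin d) ℝ =>
    -Real.log (max Θ.det a) + (Sstar * Θ).trace + γ * offDiagPenalty d c Θ with hgdef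
  have hgcont : Continuous g := continuous_gfun Sstar γ c a ha
  set K := {Θ : Matrix (Fin d) (Fin d) ℝ |
    Θ.IsSymm ∧ Θ.PosSemidef ∧ (∀ i j, |Θ i j| ≤ T) ∧ g Θ ≤ B} with hKdef
  -- members of K have det ≥ exp (−B)
  have hdetK : ∀ Θ ∈ K, Real.exp (-B) ≤ Θ.det := by
    rintro Θ ⟨-, hpsd, -, hgB⟩
    have htr : 0 ≤ (Sstar * Θ).trace := trace_mul_nonneg hSpd.posSemidef hpsd
    have hpen : 0 ≤ γ * offDiagPenalty d c Θ := mul_nonneg hγ (offDiagPenalty_nonneg c Θ)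
    have hlogge : -B ≤ Real.log (max Θ.det a) := by
      simp only [hgdef] at hgB
      linarith
    have hmaxpos : 0 < max Θ.det a := lt_of_lt_of_le ha (le_max_right _ _)
    have hmaxge : Real.exp (-B) ≤ max Θ.det a := by
      calc Real.exp (-B) ≤ Real.exp (Real.log (max Θ.det a)) := Real.exp_le_exp.mpr hlogge
        _ = max Θ.det a := Real.exp_log hmaxpos
    rcases max_cases Θ.det a with ⟨he, -⟩ | ⟨he, -⟩
    · rwa [he] at hmaxge
    · exfalso
      rw [he, hadef] at hmaxge
      have := Real.exp_lt_exp.mpr (show -B - 1 < -B by linarith)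
      linarith
  have hKpd : ∀ Θ ∈ K, Θ.PosDef := fun Θ hΘ =>
    posDef_of_posSemidef_det_ne_zero hΘ.2.1
      (lt_of_lt_of_le (Real.exp_pos _) (hdetK Θ hΘ)).ne'
  have hgf : ∀ Θ ∈ K, g Θ = f Θ := by
    intro Θ hΘ
    have hge : a ≤ Θ.det := by
      calc a = Real.exp (-B - 1) := hadef
        _ ≤ Real.exp (-B) := Real.exp_le_exp.mpr (by linarith)
        _ ≤ Θ.det := hdetK Θ hΘ
    simp only [hgdef, hfdef, eglassoObjective, max_eq_left hge]
  -- membership lemma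
  have hmemK : ∀ Θ : Matrix (Fin d) (Fin d) ℝ, Θ.IsSymm → Θ.PosDef → f Θ ≤ B → Θ ∈ K := by
    intro Θ hsym hpd hfB
    have htr : Θ.trace ≤ T := coercive_trace_bound hd hγ hm hmle hpd hfB
    refine ⟨hsym, hpd.posSemidef, fun i j => le_trans (abs_entry_le_trace hpd.posSemidef i j) htr, ?_⟩
    have hgle : g Θ ≤ f Θ := by
      have hlog : Real.log Θ.det ≤ Real.log (max Θ.det a) :=
        Real.log_le_log hpd.det_pos (le_max_left _ _)
      simp only [hgdef, hfdef, eglassoObjective]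
      linarith
    linarith
  have h1sym : (1 : Matrix (Fin d) (Fin d) ℝ).IsSymm := Matrix.isSymm_one
  have h1pd : (1 : Matrix (Fin d) (Fin d) ℝ).PosDef := Matrix.PosDef.one
  have h1K : (1 : Matrix (Fin d) (Fin d) ℝ) ∈ K := hmemK 1 h1sym h1pd le_rfl
  -- K is compact
  have hKclosed : IsClosed K := by
    have h1 : IsClosed {Θ : Matrix (Fin d) (Fin d) ℝ | Θ.IsSymm} :=
      isClosed_eq (continuous_id.matrix_transpose) continuous_id
    have h2 : IsClosed {Θ : Matrix (Fin d) (Fin d) ℝ | Θ.PosSemidef} := by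
      have e : {Θ : Matrix (Fin d) (Fin d) ℝ | Θ.PosSemidef} =
          {Θ : Matrix (Fin d) (Fin d) ℝ | Θ.IsHermitian} ∩
          ⋂ x : Fin d → ℝ, {Θ : Matrix (Fin d) (Fin d) ℝ | 0 ≤ star x ⬝ᵥ Θ *ᵥ x} := by
        ext Θ
        constructor
        · intro h
          exact ⟨h.1, Set.mem_iInter.mpr h.dotProduct_mulVec_nonneg⟩
        · rintro ⟨hh, hq⟩
          exact Matrix.PosSemidef.of_dotProduct_mulVec_nonneg hh fun x => Set.mem_iInter.mp hq x
      rw [e]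
      exact (isClosed_eq (continuous_id.matrix_conjTranspose) continuous_id).inter
        (isClosed_iInter fun x => isClosed_le continuous_const (continuous_quad x))
    have h3 : IsClosed {Θ : Matrix (Fin d) (Fin d) ℝ | ∀ i j, |Θ i j| ≤ T} := by
      have e : {Θ : Matrix (Fin d) (Fin d) ℝ | ∀ i j, |Θ i j| ≤ T} =
          ⋂ i, ⋂ j, {Θ : Matrix (Fin d) (Fin d) ℝ | |Θ i j| ≤ T} := by
        ext Θ; simp [Set.mem_iInter]
      rw [e]
      exact isClosed_iInter fun i => isClosed_iInter fun j =>
        isClosed_le (continuous_entry i j).abs continuous_const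
    have h4 : IsClosed {Θ : Matrix (Fin d) (Fin d) ℝ | g Θ ≤ B} :=
      isClosed_le hgcont continuous_const
    have e : K = {Θ : Matrix (Fin d) (Fin d) ℝ | Θ.IsSymm} ∩
        ({Θ : Matrix (Fin d) (Fin d) ℝ | Θ.PosSemidef} ∩
        ({Θ : Matrix (Fin d) (Fin d) ℝ | ∀ i j, |Θ i j| ≤ T} ∩
         {Θ : Matrix (Fin d) (Fin d) ℝ | g Θ ≤ B})) := by
      ext Θ
      simp only [hKdef, Set.mem_setOf_eq, Set.mem_inter_iff]
      try tauto
    rw [e]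
    exact h1.inter (h2.inter (h3.inter h4))
  have hKbdd : Bornology.IsBounded K := by
    have hsub : K ⊆ Metric.closedBall 0 (|T| + 1) := by
      rintro Θ ⟨-, -, hent, -⟩
      rw [Metric.mem_closedBall, dist_zero_right, Matrix.norm_le_iff (by positivity)]
      intro i j
      rw [Real.norm_eq_abs]
      calc |Θ i j| ≤ T := hent i j
        _ ≤ |T| := le_abs_self T
        _ ≤ |T| + 1 := by linarith
    exact Metric.isBounded_closedBall.subset hsub
  have hKcompact : IsCompact K := Metric.isCompact_of_isClosed_isBounded hKclosed hKbdd
  obtain ⟨Θ₀, hΘ₀K, hΘ₀min⟩ := hKcompact.exists_isMinOn ⟨1, h1K⟩ hgcont.continuousOn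
  have hΘ₀pd : Θ₀.PosDef := hKpd Θ₀ hΘ₀K
  have hΘ₀sym : Θ₀.IsSymm := hΘ₀K.1
  have hg1 : g 1 = B := by rw [hgf 1 h1K, ← hBdef]
  have hglobal : ∀ Θ' : Matrix (Fin d) (Fin d) ℝ, Θ'.IsSymm → Θ'.PosDef → f Θ₀ ≤ f Θ' := by
    intro Θ' hs hp
    by_cases hc : f Θ' ≤ B
    · have hmem := hmemK Θ' hs hp hc
      have h := isMinOn_iff.mp hΘ₀min Θ' hmem
      rwa [hgf _ hΘ₀K, hgf _ hmem] at h
    · push_neg at hc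
      have h0 : f Θ₀ ≤ B := by
        have h := isMinOn_iff.mp hΘ₀min 1 h1K
        rw [hgf _ hΘ₀K, hg1] at h
        exact h
      linarith
  refine ⟨Θ₀, ⟨⟨hΘ₀sym, hΘ₀pd⟩, hglobal⟩, ?_⟩
  rintro Θ₁ ⟨⟨hs1, hp1⟩, hmin1⟩
  by_contra hne
  have heq : f Θ₁ = f Θ₀ := le_antisymm (hmin1 Θ₀ hΘ₀sym hΘ₀pd) (hglobal Θ₁ hs1 hp1)
  set Θm := (2:ℝ)⁻¹ • (Θ₁ + Θ₀) with hΘm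
  have hmsym : Θm.IsSymm := by
    unfold Matrix.IsSymm at *
    rw [hΘm, Matrix.transpose_smul, Matrix.transpose_add, hs1, hΘ₀sym]
  have hmpd : Θm.PosDef := posDef_smul (hp1.add hΘ₀pd) (by norm_num)
  have hdetlt : Θ₁.det * Θ₀.det < Θm.det ^ 2 := det_avg_sq_gt hp1 hΘ₀pd hne
  have hd1 : 0 < Θ₁.det := hp1.det_pos
  have hd0 : 0 < Θ₀.det := hΘ₀pd.det_pos
  have hdm : 0 < Θm.det := hmpd.det_pos
  have hlog : Real.log Θ₁.det + Real.log Θ₀.det < 2 * Real.log Θm.det := by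
    have h := Real.log_lt_log (mul_pos hd1 hd0) hdetlt
    rwa [Real.log_mul hd1.ne' hd0.ne', Real.log_pow, Nat.cast_ofNat] at h
  have htrace : (Sstar * Θm).trace = 2⁻¹ * ((Sstar * Θ₁).trace + (Sstar * Θ₀).trace) := by
    rw [hΘm, Matrix.mul_smul, Matrix.trace_smul, Matrix.mul_add, Matrix.trace_add, smul_eq_mul]
  have hpen : offDiagPenalty d c Θm ≤ 2⁻¹ * (offDiagPenalty d c Θ₁ + offDiagPenalty d c Θ₀) := by
    unfold offDiagPenalty
    rw [← Finset.sum_add_distrib, Finset.mul_sum]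
    refine Finset.sum_le_sum fun i _ => ?_
    rw [← Finset.sum_add_distrib, Finset.mul_sum]
    refine Finset.sum_le_sum fun j _ => ?_
    have e : Θm i j - c = 2⁻¹ * (Θ₁ i j - c) + 2⁻¹ * (Θ₀ i j - c) := by
      rw [hΘm]
      simp [Matrix.smul_apply, Matrix.add_apply]
      ring
    rw [e]
    calc |2⁻¹ * (Θ₁ i j - c) + 2⁻¹ * (Θ₀ i j - c)|
        ≤ |2⁻¹ * (Θ₁ i j - c)| + |2⁻¹ * (Θ₀ i j - c)| := abs_add_le _ _
      _ = 2⁻¹ * (|Θ₁ i j - c| + |Θ₀ i j - c|) := by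
          rw [abs_mul, abs_mul]
          rw [abs_of_nonneg (by norm_num : (0:ℝ) ≤ 2⁻¹)]
          ring
  have hpenmul : γ * offDiagPenalty d c Θm
      ≤ 2⁻¹ * (γ * offDiagPenalty d c Θ₁ + γ * offDiagPenalty d c Θ₀) := by
    have := mul_le_mul_of_nonneg_left hpen hγ
    linarith
  have hstrict : f Θm < 2⁻¹ * (f Θ₁ + f Θ₀) := by
    simp only [hfdef, eglassoObjective]
    have hlogpart : -Real.log Θm.det < 2⁻¹ * (-Real.log Θ₁.det + -Real.log Θ₀.det) := by
      linarith
    linarith [htrace, hpenmul]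
  have hge : f Θ₀ ≤ f Θm := hglobal Θm hmsym hmpd
  rw [heq] at hstrict
  linarith
end
end

section
/- Let d ≥ 1, let A and B be symmetric d×d real matrices with A invertible and B = A⁻¹, and let Δ be a symmetric d×d real matrix each of whose rows has at most D nonzero entries. Suppose D·|||B|||_∞·‖Δ‖_∞ ≤ q for some q < 1. Then A + Δ is invertible and ‖(A + Δ)⁻¹ − B + BΔB‖_∞ ≤ D·‖Δ‖_∞²·|||B|||_∞³ / (1 − q). -/
open Matrix

noncomputable section

/-- Elementwise max-norm ‖A‖_∞ = max_{i,j} |A_{ij}|. -/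
def elemNorm {m n : Type*} [Fintype m] [Fintype n] (A : Matrix m n ℝ) : ℝ :=
  ⨆ i, ⨆ j, |A i j|

/-- ℓ∞-operator norm |||A|||_∞ = max_i Σ_j |A_{ij}|. -/
def opNormInf {m n : Type*} [Fintype m] [Fintype n] (A : Matrix m n ℝ) : ℝ :=
  ⨆ i, ∑ j, |A i j|

set_option linter.unusedSectionVars false
set_option linter.unusedVariables false

section helper
variable {n : Type*} [Fintype n] [Nonempty n] [DecidableEq n]

lemma abs_le_elemNorm (A : Matrix n n ℝ) (i j : n) : |A i j| ≤ elemNorm A := by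
  have h1 : |A i j| ≤ ⨆ j', |A i j'| :=
    le_ciSup (f := fun j' => |A i j'|) (Set.Finite.bddAbove (Set.finite_range _)) j
  exact h1.trans (le_ciSup (f := fun i' => ⨆ j', |A i' j'|)
    (Set.Finite.bddAbove (Set.finite_range _)) i)

lemma elemNorm_nonneg (A : Matrix n n ℝ) : 0 ≤ elemNorm A :=
  (abs_nonneg _).trans (abs_le_elemNorm A (Classical.arbitrary n) (Classical.arbitrary n))

lemma elemNorm_le {A : Matrix n n ℝ} {c : ℝ} (h : ∀ i j, |A i j| ≤ c) :
    elemNorm A ≤ c := ciSup_le fun i => ciSup_le fun j => h i j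

lemma rowSum_le_opNormInf (A : Matrix n n ℝ) (i : n) :
    ∑ j, |A i j| ≤ opNormInf A :=
  le_ciSup (f := fun i' => ∑ j, |A i' j|) (Set.Finite.bddAbove (Set.finite_range _)) i

lemma opNormInf_nonneg (A : Matrix n n ℝ) : 0 ≤ opNormInf A :=
  (Finset.sum_nonneg fun j _ => abs_nonneg _).trans
    (rowSum_le_opNormInf A (Classical.arbitrary n))

lemma opNormInf_le {A : Matrix n n ℝ} {c : ℝ} (h : ∀ i, ∑ j, |A i j| ≤ c) :
    opNormInf A ≤ c := ciSup_le h

lemma elemNorm_le_opNormInf (A : Matrix n n ℝ) : elemNorm A ≤ opNormInf A := by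
  refine elemNorm_le fun i j => ?_
  calc |A i j| ≤ ∑ k, |A i k| :=
        Finset.single_le_sum (f := fun k => |A i k|) (fun k _ => abs_nonneg _) (Finset.mem_univ j)
    _ ≤ opNormInf A := rowSum_le_opNormInf A i

lemma elemNorm_mul_le_op_elem (X Y : Matrix n n ℝ) :
    elemNorm (X * Y) ≤ opNormInf X * elemNorm Y := by
  refine elemNorm_le fun i j => ?_
  calc |(X * Y) i j| = |∑ k, X i k * Y k j| := by simp [Matrix.mul_apply]
    _ ≤ ∑ k, |X i k * Y k j| := Finset.abs_sum_le_sum_abs _ _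
    _ ≤ ∑ k, |X i k| * elemNorm Y := by
        refine Finset.sum_le_sum fun k _ => ?_
        rw [abs_mul]
        exact mul_le_mul_of_nonneg_left (abs_le_elemNorm Y k j) (abs_nonneg _)
    _ = (∑ k, |X i k|) * elemNorm Y := by rw [Finset.sum_mul]
    _ ≤ opNormInf X * elemNorm Y :=
        mul_le_mul_of_nonneg_right (rowSum_le_opNormInf X i) (elemNorm_nonneg Y)

lemma elemNorm_mul_le_elem_op (X Y : Matrix n n ℝ) :
    elemNorm (X * Y) ≤ elemNorm X * opNormInf Yᵀ := by
  refine elemNorm_le fun i j => ?_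
  calc |(X * Y) i j| = |∑ k, X i k * Y k j| := by simp [Matrix.mul_apply]
    _ ≤ ∑ k, |X i k * Y k j| := Finset.abs_sum_le_sum_abs _ _
    _ ≤ ∑ k, elemNorm X * |Y k j| := by
        refine Finset.sum_le_sum fun k _ => ?_
        rw [abs_mul]
        exact mul_le_mul_of_nonneg_right (abs_le_elemNorm X i k) (abs_nonneg _)
    _ = elemNorm X * ∑ k, |Yᵀ j k| := by rw [← Finset.mul_sum]; rfl
    _ ≤ elemNorm X * opNormInf Yᵀ :=
        mul_le_mul_of_nonneg_left (rowSum_le_opNormInf Yᵀ j) (elemNorm_nonneg X)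

lemma opNormInf_mul_le (X Y : Matrix n n ℝ) :
    opNormInf (X * Y) ≤ opNormInf X * opNormInf Y := by
  refine opNormInf_le fun i => ?_
  calc ∑ j, |(X * Y) i j| ≤ ∑ j, ∑ k, |X i k * Y k j| := by
        refine Finset.sum_le_sum fun j _ => ?_
        simpa [Matrix.mul_apply] using Finset.abs_sum_le_sum_abs (fun k => X i k * Y k j) _
    _ = ∑ k, |X i k| * ∑ j, |Y k j| := by
        rw [Finset.sum_comm]
        exact Finset.sum_congr rfl fun k _ => by rw [Finset.mul_sum]; exact Finset.sum_congr rfl fun j _ => abs_mul _ _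
    _ ≤ ∑ k, |X i k| * opNormInf Y :=
        Finset.sum_le_sum fun k _ =>
          mul_le_mul_of_nonneg_left (rowSum_le_opNormInf Y k) (abs_nonneg _)
    _ = (∑ k, |X i k|) * opNormInf Y := by rw [Finset.sum_mul]
    _ ≤ opNormInf X * opNormInf Y :=
        mul_le_mul_of_nonneg_right (rowSum_le_opNormInf X i) (opNormInf_nonneg Y)

lemma opNormInf_sub_le (X Y : Matrix n n ℝ) :
    opNormInf (X - Y) ≤ opNormInf X + opNormInf Y := by
  refine opNormInf_le fun i => ?_
  calc ∑ j, |(X - Y) i j| ≤ ∑ j, (|X i j| + |Y i j|) :=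
        Finset.sum_le_sum fun j _ => by
          simpa [Matrix.sub_apply] using abs_sub (X i j) (Y i j)
    _ = (∑ j, |X i j|) + ∑ j, |Y i j| := Finset.sum_add_distrib
    _ ≤ opNormInf X + opNormInf Y :=
        add_le_add (rowSum_le_opNormInf X i) (rowSum_le_opNormInf Y i)

end helper

/-- Neumann-series remainder bound from the proof of Theorem 4.1: if A is
symmetric invertible with inverse B, Δ is symmetric with at most D nonzero
entries per row, and D·|||B|||_∞·‖Δ‖_∞ ≤ q < 1, then A + Δ is invertible and
‖(A+Δ)⁻¹ − B + BΔB‖_∞ ≤ D·‖Δ‖_∞²·|||B|||_∞³/(1−q). -/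
theorem extreme_glasso_stmt11 (d : ℕ) (hd : 1 ≤ d)
    (D : ℕ) (q : ℝ) (hq : q < 1)
    (A B Δ : Matrix (Fin d) (Fin d) ℝ)
    (hAsym : A.IsSymm) (hΔsym : Δ.IsSymm)
    (hAinv : IsUnit A.det) (hBA : B = A⁻¹)
    (hrows : ∀ i : Fin d, (Finset.univ.filter fun j => Δ i j ≠ 0).card ≤ D)
    (hbound : (D : ℝ) * opNormInf B * elemNorm Δ ≤ q) :
    IsUnit (A + Δ).det ∧
    elemNorm ((A + Δ)⁻¹ - B + B * Δ * B) ≤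
      (D : ℝ) * (elemNorm Δ) ^ 2 * (opNormInf B) ^ 3 / (1 - q) := by
  haveI : Nonempty (Fin d) := ⟨⟨0, hd⟩⟩
  have hΔn : (0:ℝ) ≤ elemNorm Δ := elemNorm_nonneg Δ
  have hBn : (0:ℝ) ≤ opNormInf B := opNormInf_nonneg B
  have hq0 : (0:ℝ) ≤ q := le_trans (by positivity) hbound
  have h1q : (0:ℝ) < 1 - q := by linarith
  -- row-sparsity bound on the operator norm of Δ
  have hΔop : opNormInf Δ ≤ (D:ℝ) * elemNorm Δ := by
    refine opNormInf_le fun i => ?_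
    have hsum : ∑ j, |Δ i j| = ∑ j ∈ Finset.univ.filter (fun j => Δ i j ≠ 0), |Δ i j| := by
      refine (Finset.sum_subset (Finset.filter_subset _ _) fun j _ hj => ?_).symm
      simp only [Finset.mem_filter, Finset.mem_univ, true_and, not_not] at hj
      simp [hj]
    rw [hsum]
    calc ∑ j ∈ Finset.univ.filter (fun j => Δ i j ≠ 0), |Δ i j|
        ≤ (Finset.univ.filter (fun j => Δ i j ≠ 0)).card • elemNorm Δ :=
          Finset.sum_le_card_nsmul _ _ _ fun j _ => abs_le_elemNorm Δ i j
      _ = ((Finset.univ.filter (fun j => Δ i j ≠ 0)).card : ℝ) * elemNorm Δ := by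
          rw [nsmul_eq_mul]
      _ ≤ (D:ℝ) * elemNorm Δ := by
          exact mul_le_mul_of_nonneg_right (Nat.cast_le.mpr (hrows i)) hΔn
  have hkey : opNormInf B * opNormInf Δ ≤ q := by
    calc opNormInf B * opNormInf Δ ≤ opNormInf B * ((D:ℝ) * elemNorm Δ) :=
          mul_le_mul_of_nonneg_left hΔop hBn
      _ = (D:ℝ) * opNormInf B * elemNorm Δ := by ring
      _ ≤ q := hbound
  have hBΔop : opNormInf (B * Δ) ≤ q := (opNormInf_mul_le B Δ).trans hkey
  have hBA1 : B * A = 1 := by rw [hBA]; exact Matrix.nonsing_inv_mul A hAinv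
  have hAB1 : A * B = 1 := by rw [hBA]; exact Matrix.mul_nonsing_inv A hAinv
  -- invertibility of A + Δ
  have hdet : (A + Δ).det ≠ 0 := by
    intro h0
    obtain ⟨v, hv0, hvz⟩ := Matrix.exists_mulVec_eq_zero_iff.mpr h0
    have h1 : A.mulVec v + Δ.mulVec v = 0 := by rw [← Matrix.add_mulVec]; exact hvz
    have hv : v = -(B * Δ).mulVec v := by
      have h2 := congrArg B.mulVec h1
      rw [Matrix.mulVec_add, Matrix.mulVec_mulVec, Matrix.mulVec_mulVec,
        Matrix.mulVec_zero, hBA1, Matrix.one_mulVec] at h2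
      exact eq_neg_of_add_eq_zero_left h2
    obtain ⟨i, -, hi⟩ := Finset.exists_max_image Finset.univ (fun j => |v j|)
      Finset.univ_nonempty
    have hipos : 0 < |v i| := by
      obtain ⟨k, hk⟩ := Function.ne_iff.mp hv0
      exact lt_of_lt_of_le (abs_pos.mpr hk) (hi k (Finset.mem_univ k))
    have hcontr : |v i| ≤ q * |v i| := by
      calc |v i| = |(B * Δ).mulVec v i| := by rw [congrFun hv i]; simp [abs_neg]
        _ = |∑ k, (B * Δ) i k * v k| := by simp [Matrix.mulVec, dotProduct]
        _ ≤ ∑ k, |(B * Δ) i k * v k| := Finset.abs_sum_le_sum_abs _ _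
        _ ≤ ∑ k, |(B * Δ) i k| * |v i| := by
            refine Finset.sum_le_sum fun k _ => ?_
            rw [abs_mul]
            exact mul_le_mul_of_nonneg_left (hi k (Finset.mem_univ k)) (abs_nonneg _)
        _ = (∑ k, |(B * Δ) i k|) * |v i| := by rw [Finset.sum_mul]
        _ ≤ opNormInf (B * Δ) * |v i| :=
            mul_le_mul_of_nonneg_right (rowSum_le_opNormInf _ i) (abs_nonneg _)
        _ ≤ q * |v i| := mul_le_mul_of_nonneg_right hBΔop (abs_nonneg _)
    nlinarith
  have hMunit : IsUnit (A + Δ).det := isUnit_iff_ne_zero.mpr hdet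
  refine ⟨hMunit, ?_⟩
  set N := (A + Δ)⁻¹ with hN
  have hMN : (A + Δ) * N = 1 := Matrix.mul_nonsing_inv _ hMunit
  have hNM : N * (A + Δ) = 1 := Matrix.nonsing_inv_mul _ hMunit
  -- the two resolvent identities
  have hleft : N = B - B * Δ * N := by
    have h2 : B * (A * N) + B * (Δ * N) = B := by
      rw [← mul_add, ← add_mul, hMN, mul_one]
    rw [← mul_assoc, ← mul_assoc, hBA1, one_mul] at h2
    exact eq_sub_of_add_eq h2
  have hright : N = B - N * Δ * B := by
    have h2 : (N * A) * B + (N * Δ) * B = B := by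
      rw [← add_mul, ← mul_add, hNM, one_mul]
    rw [mul_assoc N A B, hAB1, mul_one] at h2
    exact eq_sub_of_add_eq h2
  have e1 : B * Δ * N = B - N := eq_sub_of_add_eq' (eq_sub_iff_add_eq.mp hleft)
  have e2 : N * Δ * B = B - N := eq_sub_of_add_eq' (eq_sub_iff_add_eq.mp hright)
  have hR : N - B + B * Δ * B = B * (Δ * (N * Δ * B)) := by
    calc N - B + B * Δ * B = B * Δ * B - B * Δ * N := by rw [e1]; abel
      _ = B * Δ * (B - N) := by rw [mul_sub]
      _ = B * Δ * (N * Δ * B) := by rw [e2]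
      _ = B * (Δ * (N * Δ * B)) := by rw [mul_assoc]
  -- operator-norm bound on N
  have hNn : (0:ℝ) ≤ opNormInf N := opNormInf_nonneg N
  have hNop : opNormInf N ≤ opNormInf B / (1 - q) := by
    have h1 : opNormInf N ≤ opNormInf B + q * opNormInf N := by
      calc opNormInf N = opNormInf (B - B * Δ * N) := by conv_lhs => rw [hleft]
        _ ≤ opNormInf B + opNormInf (B * Δ * N) := opNormInf_sub_le _ _
        _ ≤ opNormInf B + opNormInf (B * Δ) * opNormInf N :=
            add_le_add (le_refl _) (opNormInf_mul_le _ _)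
        _ ≤ opNormInf B + q * opNormInf N :=
            add_le_add (le_refl _) (mul_le_mul_of_nonneg_right hBΔop hNn)
    rw [le_div_iff₀ h1q]
    linarith
  -- symmetry of B
  have hBsym : Bᵀ = B := by
    rw [hBA, Matrix.transpose_nonsing_inv, hAsym.eq]
  -- the final chain of norm bounds
  have c1 : elemNorm (N * Δ) ≤ opNormInf N * elemNorm Δ := elemNorm_mul_le_op_elem N Δ
  have c2 : elemNorm (N * Δ * B) ≤ elemNorm (N * Δ) * opNormInf B := by
    have := elemNorm_mul_le_elem_op (N * Δ) B
    rwa [hBsym] at this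
  have c3 : elemNorm (Δ * (N * Δ * B)) ≤ opNormInf Δ * elemNorm (N * Δ * B) :=
    elemNorm_mul_le_op_elem _ _
  have c4 : elemNorm (B * (Δ * (N * Δ * B))) ≤ opNormInf B * elemNorm (Δ * (N * Δ * B)) :=
    elemNorm_mul_le_op_elem _ _
  have hnn1 : (0:ℝ) ≤ elemNorm (N * Δ * B) := elemNorm_nonneg _
  rw [hR]
  calc elemNorm (B * (Δ * (N * Δ * B)))
      ≤ opNormInf B * (opNormInf Δ * elemNorm (N * Δ * B)) :=
        c4.trans (mul_le_mul_of_nonneg_left c3 hBn)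
    _ ≤ opNormInf B * (((D:ℝ) * elemNorm Δ) * (elemNorm (N * Δ) * opNormInf B)) := by
        refine mul_le_mul_of_nonneg_left ?_ hBn
        exact mul_le_mul hΔop c2 hnn1 (by positivity)
    _ ≤ opNormInf B * (((D:ℝ) * elemNorm Δ) * ((opNormInf N * elemNorm Δ) * opNormInf B)) := by
        refine mul_le_mul_of_nonneg_left (mul_le_mul_of_nonneg_left ?_ (by positivity)) hBn
        exact mul_le_mul_of_nonneg_right c1 hBn
    _ ≤ opNormInf B * (((D:ℝ) * elemNorm Δ) * (((opNormInf B / (1 - q)) * elemNorm Δ) * opNormInf B)) := by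
        refine mul_le_mul_of_nonneg_left (mul_le_mul_of_nonneg_left ?_ (by positivity)) hBn
        exact mul_le_mul_of_nonneg_right (mul_le_mul_of_nonneg_right hNop hΔn) hBn
    _ = (D : ℝ) * (elemNorm Δ) ^ 2 * (opNormInf B) ^ 3 / (1 - q) := by
        field_simp
end
end
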